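/- Let G_0, G_1, G_2 ∈ F_q^{1×n} be row vectors such that: (i) every full-size minor (i.e., every entry combination giving a nonzero-pattern determinant that is nonzero) of the 3n-column matrix [G_0 G_1 G_2] is nonzero (equivalently, all entries of G_0, G_1, G_2 are nonzero, since k = 1 means full-size minors are single entries), (ii) all non-trivially-zero 2×2 minors of the matrix [[G_0, G_1],[0, G_0]] are nonzero, and (iii) all non-trivially-zero 2×2 minors of [[G_2, G_1],[0, G_2]] are nonzero. Then for every nonzero u(z) ∈ F_q[z], wt(u(z)·(G_0 + G_1 z + G_2 z^2)) ≥ 3n − 1. -/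
import Mathlib

/-- A full-size minor (given by the column selection `f`) of `A` is trivially zero if,
replacing nonzero entries by independent indeterminates, the determinant is the zero
polynomial; equivalently every permutation product contains a zero entry of `A`. -/
def IsTrivZero {F : Type*} [Zero F] {ι κ : Type*} [Fintype ι] [DecidableEq ι]
    (A : Matrix ι κ F) (f : ι ↪ κ) : Prop :=
  ∀ σ : Equiv.Perm ι, ∃ i, A i (f (σ i)) = 0

open Polynomial in
theorem stmt4 {F : Type*} [Field F] [Fintype F] {n : ℕ} (hn : 1 ≤ n)
    (G0 G1 G2 : Fin n → F)
    (h0 : ∀ j, G0 j ≠ 0) (h1 : ∀ j, G1 j ≠ 0) (h2 : ∀ j, G2 j ≠ 0)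
    (hM1 : ∀ f : Fin 2 ↪ Fin 2 × Fin n,
      ¬ IsTrivZero (Matrix.of fun (i : Fin 2) (p : Fin 2 × Fin n) =>
          if i = 0 then (if p.1 = 0 then G0 p.2 else G1 p.2)
          else (if p.1 = 0 then 0 else G0 p.2)) f →
      ((Matrix.of fun (i : Fin 2) (p : Fin 2 × Fin n) =>
          if i = 0 then (if p.1 = 0 then G0 p.2 else G1 p.2)
          else (if p.1 = 0 then 0 else G0 p.2)).submatrix id f).det ≠ 0)
    (hM2 : ∀ f : Fin 2 ↪ Fin 2 × Fin n,
      ¬ IsTrivZero (Matrix.of fun (i : Fin 2) (p : Fin 2 × Fin n) =>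
          if i = 0 then (if p.1 = 0 then G2 p.2 else G1 p.2)
          else (if p.1 = 0 then 0 else G2 p.2)) f →
      ((Matrix.of fun (i : Fin 2) (p : Fin 2 × Fin n) =>
          if i = 0 then (if p.1 = 0 then G2 p.2 else G1 p.2)
          else (if p.1 = 0 then 0 else G2 p.2)).submatrix id f).det ≠ 0)
    (u : Polynomial F) (hu : u ≠ 0) :
    3 * n - 1 ≤ ∑ j : Fin n,
      (u * (Polynomial.C (G0 j) + Polynomial.C (G1 j) * Polynomial.X
        + Polynomial.C (G2 j) * Polynomial.X ^ 2)).support.card := by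
  classical
  set g : Fin n → F[X] := fun j => C (G0 j) + C (G1 j) * X + C (G2 j) * X ^ 2 with hgdef
  show 3 * n - 1 ≤ ∑ j : Fin n, (u * g j).support.card
  -- ratio distinctness
  have hα : ∀ j k : Fin n, j ≠ k → G1 j * G0 k - G1 k * G0 j ≠ 0 := by
    intro j k hjk
    have hinj : Function.Injective ![((1 : Fin 2), j), ((1 : Fin 2), k)] := by
      intro a b hab
      fin_cases a <;> fin_cases b <;> simp_all
    set f : Fin 2 ↪ Fin 2 × Fin n := ⟨![((1 : Fin 2), j), ((1 : Fin 2), k)], hinj⟩ with hf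
    have hnt : ¬ IsTrivZero (Matrix.of fun (i : Fin 2) (p : Fin 2 × Fin n) =>
          if i = 0 then (if p.1 = 0 then G0 p.2 else G1 p.2)
          else (if p.1 = 0 then 0 else G0 p.2)) f := by
      intro h
      obtain ⟨i, hi⟩ := h (Equiv.refl _)
      fin_cases i <;> simp [hf] at hi
      · exact h1 j hi
      · exact h0 k hi
    have := hM1 f hnt
    rw [Matrix.det_fin_two] at this
    simpa [hf, Matrix.submatrix] using this
  -- basic facts on g
  have hcoeff0 : ∀ j, (g j).coeff 0 = G0 j := by
    intro j; simp [hgdef, coeff_add, coeff_C_mul]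
  have hgne : ∀ j, g j ≠ 0 := by
    intro j h
    exact h0 j (by rw [← hcoeff0 j, h, coeff_zero])
  have hgdeg : ∀ j, (g j).natDegree = 2 := by
    intro j
    rw [show g j = C (G2 j) * X ^ 2 + C (G1 j) * X + C (G0 j) by rw [hgdef]; ring]
    exact natDegree_quadratic (h2 j)
  have hgtr : ∀ j, (g j).natTrailingDegree = 0 := by
    intro j
    exact natTrailingDegree_eq_zero.mpr (Or.inr (by rw [hcoeff0 j]; exact h0 j))
  set s := u.natTrailingDegree with hs
  set d := u.natDegree with hd
  have hsd : s ≤ d := u.natTrailingDegree_le_natDegree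
  have hune : ∀ j, u * g j ≠ 0 := fun j => mul_ne_zero hu (hgne j)
  have hsm : ∀ j, s ∈ (u * g j).support := by
    intro j
    have := natTrailingDegree_mem_support_of_nonzero (hune j)
    rwa [natTrailingDegree_mul hu (hgne j), hgtr j, Nat.add_zero] at this
  have hdm : ∀ j, d + 2 ∈ (u * g j).support := by
    intro j
    have := natDegree_mem_support_of_nonzero (hune j)
    rwa [natDegree_mul hu (hgne j), hgdeg j] at this
  have hsub2 : ∀ j, ({s, d + 2} : Finset ℕ) ⊆ (u * g j).support := by
    intro j m hm
    rcases Finset.mem_insert.mp hm with h | h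
    · exact h ▸ hsm j
    · exact (Finset.mem_singleton.mp h) ▸ hdm j
  have hcard2 : ({s, d + 2} : Finset ℕ).card = 2 := by
    rw [Finset.card_insert_of_notMem (by simp; omega), Finset.card_singleton]
  have hlow : ∀ j, 2 ≤ (u * g j).support.card := by
    intro j
    calc 2 = ({s, d + 2} : Finset ℕ).card := hcard2.symm
    _ ≤ _ := Finset.card_le_card (hsub2 j)
  -- key: at most one j with support = {s, d+2}
  have hkey : ∀ j k : Fin n, j ≠ k → (u * g j).support = {s, d + 2} →
      (u * g k).support = {s, d + 2} → False := by
    intro j k hjk hSj hSk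
    set α := G1 j * G0 k - G1 k * G0 j with hαdef
    set β := G0 k * G2 j - G0 j * G2 k with hβdef
    set q : F[X] := C α + C β * X with hqdef
    have hqc : q.coeff 0 = α := by simp [hqdef]
    have hαne : α ≠ 0 := hα j k hjk
    have hqne : q ≠ 0 := fun h => hαne (by rw [← hqc, h, coeff_zero])
    have hqtr : q.natTrailingDegree = 0 :=
      natTrailingDegree_eq_zero.mpr (Or.inr (by rw [hqc]; exact hαne))
    have hfac : C (G0 k) * (u * g j) - C (G0 j) * (u * g k) = u * (X * q) := by
      rw [hgdef, hqdef, hαdef, hβdef]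
      push_cast [map_sub, map_mul]
      ring
    set h : F[X] := u * (X * q) with hhdef
    have hXq : (X : F[X]) * q ≠ 0 := mul_ne_zero X_ne_zero hqne
    have hhne : h ≠ 0 := mul_ne_zero hu hXq
    have hht : h.natTrailingDegree = s + 1 := by
      rw [hhdef, natTrailingDegree_mul hu hXq, natTrailingDegree_mul X_ne_zero hqne,
        natTrailingDegree_X, hqtr, ← hs]
    have hmem : s + 1 ∈ h.support := hht ▸ natTrailingDegree_mem_support_of_nonzero hhne
    have hco : h.coeff (s + 1) ≠ 0 := mem_support_iff.mp hmem
    have hzero : h.coeff (s + 1) = 0 := by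
      have hs1 : (s + 1) ∉ ({s, d + 2} : Finset ℕ) := by simp; omega
      have hj : (u * g j).coeff (s + 1) = 0 :=
        notMem_support_iff.mp (fun hm => hs1 (hSj ▸ hm))
      have hk : (u * g k).coeff (s + 1) = 0 :=
        notMem_support_iff.mp (fun hm => hs1 (hSk ▸ hm))
      rw [← hfac, coeff_sub, coeff_C_mul, coeff_C_mul, hj, hk]
      ring
    exact hco hzero
  -- counting
  by_cases hall : ∀ j, 3 ≤ (u * g j).support.card
  · have : 3 * n ≤ ∑ j : Fin n, (u * g j).support.card := by
      calc 3 * n = ∑ _j : Fin n, 3 := by simp [mul_comm]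
      _ ≤ _ := Finset.sum_le_sum fun j _ => hall j
    omega
  · push_neg at hall
    obtain ⟨j0, hj0⟩ := hall
    have hj0eq : (u * g j0).support = {s, d + 2} :=
      (Finset.eq_of_subset_of_card_le (hsub2 j0) (by omega)).symm
    have hrest : ∀ j, j ≠ j0 → 3 ≤ (u * g j).support.card := by
      intro j hj
      by_contra hlt
      push_neg at hlt
      have hjeq : (u * g j).support = {s, d + 2} :=
        (Finset.eq_of_subset_of_card_le (hsub2 j) (by omega)).symm
      exact hkey j j0 hj hjeq hj0eq
    have hsplit : (u * g j0).support.card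
        + ∑ j ∈ Finset.univ.erase j0, (u * g j).support.card
        = ∑ j : Fin n, (u * g j).support.card :=
      Finset.add_sum_erase Finset.univ
        (fun j => (u * g j).support.card) (Finset.mem_univ j0)
    have hsum2 : 3 * (n - 1) ≤ ∑ j ∈ Finset.univ.erase j0, (u * g j).support.card := by
      calc 3 * (n - 1) = ∑ _j ∈ Finset.univ.erase j0, 3 := by
            simp [Finset.card_erase_of_mem, mul_comm]
      _ ≤ _ := Finset.sum_le_sum fun j hj => hrest j (Finset.ne_of_mem_erase hj)
    have hl0 := hlow j0
    omega
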